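/- Let g be the formal power series over ℚ given by g = Σ_{n≥0} (G n / n!)·Xⁿ. Then the formal derivative of g satisfies g′ = (1 + X)·g² in ℚ⟦X⟧ (and g has constant term 1). -/

import Mathlib

open Finset PowerSeries

lemma key_aux (G : ℕ → ℕ)
    (hG : ∀ n : ℕ, 1 ≤ n →
      G n = (∑ i ∈ Finset.Icc 1 n,
              Nat.choose (n - 1) (i - 1) * G (n - i) * G (i - 1)) +
            (∑ i ∈ Finset.Icc 1 (n - 1),
              (n - i) * Nat.choose (n - 1) (i - 1) * G (n - i - 1) * G (i - 1)))
    (n : ℕ) :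
    (G (n+1) : ℚ) / (Nat.factorial n : ℚ) =
      (∑ i ∈ Finset.range (n+1),
        ((G i : ℚ) / (Nat.factorial i : ℚ)) * ((G (n-i) : ℚ) / (Nat.factorial (n-i) : ℚ))) +
      (∑ i ∈ Finset.range n,
        ((G i : ℚ) / (Nat.factorial i : ℚ)) * ((G (n-1-i) : ℚ) / (Nat.factorial (n-1-i) : ℚ))) := by
  have hrec := hG (n+1) (by omega)
  have h1 : (∑ i ∈ Finset.Icc 1 (n+1),
      Nat.choose n (i - 1) * G (n + 1 - i) * G (i - 1)) =
      ∑ j ∈ Finset.range (n+1), Nat.choose n j * G (n - j) * G j := by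
    rw [show Finset.Icc 1 (n+1) = Finset.Ico 1 (n+2) by rfl, Finset.sum_Ico_eq_sum_range]
    apply Finset.sum_congr rfl
    intro j hj
    have e1 : 1 + j - 1 = j := by omega
    have e2 : n + 1 - (1 + j) = n - j := by omega
    rw [e1, e2]
  have h2 : (∑ i ∈ Finset.Icc 1 n,
      (n + 1 - i) * Nat.choose n (i - 1) * G (n + 1 - i - 1) * G (i - 1)) =
      ∑ j ∈ Finset.range n, (n - j) * Nat.choose n j * G (n - 1 - j) * G j := by
    rw [show Finset.Icc 1 n = Finset.Ico 1 (n+1) by rfl, Finset.sum_Ico_eq_sum_range]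
    apply Finset.sum_congr rfl
    intro j hj
    simp only [Finset.mem_range] at hj
    have e1 : 1 + j - 1 = j := by omega
    have e2 : n + 1 - (1 + j) - 1 = n - 1 - j := by omega
    have e3 : n + 1 - (1 + j) = n - j := by omega
    rw [e1, e2, e3]
  simp only [Nat.add_sub_cancel] at hrec
  rw [h1, h2] at hrec
  have hfact : (Nat.factorial n : ℚ) ≠ 0 := by positivity
  rw [div_eq_iff hfact, hrec]
  push_cast
  rw [add_mul, Finset.sum_mul, Finset.sum_mul]
  congr 1
  · apply Finset.sum_congr rfl
    intro i hi
    simp only [Finset.mem_range] at hi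
    have hi' : i ≤ n := by omega
    have hc : (Nat.choose n i : ℚ) = (Nat.factorial n : ℚ) / (Nat.factorial i * Nat.factorial (n-i)) :=
      Nat.cast_choose ℚ hi'
    have h1 : (Nat.factorial i : ℚ) ≠ 0 := by positivity
    have h2 : (Nat.factorial (n-i) : ℚ) ≠ 0 := by positivity
    rw [hc]
    field_simp
  · apply Finset.sum_congr rfl
    intro i hi
    simp only [Finset.mem_range] at hi
    have key : ((n - i : ℕ) : ℚ) * (Nat.choose n i : ℚ) =
        (Nat.factorial n : ℚ) / (Nat.factorial i * Nat.factorial (n-1-i)) := by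
      have hc : (Nat.choose n i : ℚ) = (Nat.factorial n : ℚ) / (Nat.factorial i * Nat.factorial (n-i)) :=
        Nat.cast_choose ℚ (by omega : i ≤ n)
      have hni : n - i = (n - 1 - i) + 1 := by omega
      have h1 : (Nat.factorial i : ℚ) ≠ 0 := by positivity
      have h2 : (Nat.factorial (n-1-i) : ℚ) ≠ 0 := by positivity
      rw [hc, hni, Nat.factorial_succ]
      push_cast
      field_simp
    have h1 : (Nat.factorial i : ℚ) ≠ 0 := by positivity
    have h2 : (Nat.factorial (n-1-i) : ℚ) ≠ 0 := by positivity
    rw [key]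
    field_simp

/-- The exponential generating function `g` of the sequence `G` counting complete
τ-exceptional sequences over `Γ_n^2` satisfies the ODE `g' = (1 + X) * g ^ 2`,
and has constant term `1`. -/
theorem egf_G_ode (G : ℕ → ℕ) (hG0 : G 0 = 1)
    (hG : ∀ n : ℕ, 1 ≤ n →
      G n = (∑ i ∈ Finset.Icc 1 n,
              Nat.choose (n - 1) (i - 1) * G (n - i) * G (i - 1)) +
            (∑ i ∈ Finset.Icc 1 (n - 1),
              (n - i) * Nat.choose (n - 1) (i - 1) * G (n - i - 1) * G (i - 1)))
    (g : PowerSeries ℚ)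
    (hg : g = PowerSeries.mk (fun n => (G n : ℚ) / (Nat.factorial n : ℚ))) :
    PowerSeries.mk (fun n =>
        ((n + 1 : ℕ) : ℚ) * PowerSeries.coeff (n + 1) g) =
      (1 + PowerSeries.X) * g ^ 2 ∧
    PowerSeries.constantCoeff g = 1 := by
  subst hg
  constructor
  · ext n
    rw [add_mul, one_mul, map_add, sq]
    simp only [PowerSeries.coeff_mk]
    have hfs : ((n+1).factorial : ℚ) ≠ 0 := by positivity
    have hL : ((n+1 : ℕ):ℚ) * ((G (n+1):ℚ)/((n+1).factorial : ℚ))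
        = (G (n+1):ℚ)/(n.factorial:ℚ) := by
      rw [Nat.factorial_succ]
      have h1 : (n.factorial : ℚ) ≠ 0 := by positivity
      push_cast
      field_simp
    rw [hL, key_aux G hG n]
    congr 1
    · rw [PowerSeries.coeff_mul, Finset.Nat.sum_antidiagonal_eq_sum_range_succ_mk]
      simp only [PowerSeries.coeff_mk]
    · cases n with
      | zero => simp
      | succ m =>
        rw [PowerSeries.coeff_succ_X_mul, PowerSeries.coeff_mul,
          Finset.Nat.sum_antidiagonal_eq_sum_range_succ_mk]
        simp only [PowerSeries.coeff_mk, Nat.add_sub_cancel]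
  · rw [← PowerSeries.coeff_zero_eq_constantCoeff, PowerSeries.coeff_mk]
    simp [hG0]
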